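/- Let P : (0,∞) → ℝ be C¹ and nondecreasing, ρ̃ > 0, P̃ = P(ρ̃), and H_l(ρ) = ρ ∫_{ρ̃}^{ρ} s^{-2}|P(s)−P̃|^{l−1}(P(s)−P̃) ds for l ≥ 1. Then for every ρ > 0, ρ̃ · H_l(ρ) ≤ |P(ρ) − P̃|^{l−1} (P(ρ) − P̃) (ρ − ρ̃). -/

import Mathlib

open MeasureTheory

lemma f_mono_aux (l : ℝ) (hl : 1 ≤ l) :
    Monotone (fun x : ℝ => |x| ^ (l - 1) * x) := by
  have key : ∀ a b : ℝ, 0 ≤ a → a ≤ b → |a| ^ (l - 1) * a ≤ |b| ^ (l - 1) * b := by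
    intro a b ha hab
    have hb : 0 ≤ b := ha.trans hab
    have h1 : |a| ^ (l - 1) ≤ |b| ^ (l - 1) :=
      Real.rpow_le_rpow (abs_nonneg a)
        (by rw [abs_of_nonneg ha, abs_of_nonneg hb]; exact hab) (by linarith)
    exact mul_le_mul h1 hab ha (Real.rpow_nonneg (abs_nonneg b) _)
  intro x y hxy
  rcases le_total 0 x with hx | hx
  · exact key x y hx hxy
  rcases le_total 0 y with hy | hy
  · have h1 : |x| ^ (l - 1) * x ≤ 0 :=
      mul_nonpos_of_nonneg_of_nonpos (Real.rpow_nonneg (abs_nonneg x) _) hx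
    have h2 : 0 ≤ |y| ^ (l - 1) * y :=
      mul_nonneg (Real.rpow_nonneg (abs_nonneg y) _) hy
    simp only []
    linarith
  · have := key (-y) (-x) (by linarith) (by linarith)
    simp only [abs_neg, mul_neg] at this
    simp only []
    linarith

lemma f_cont_aux (l : ℝ) (hl : 1 ≤ l) :
    Continuous (fun x : ℝ => |x| ^ (l - 1) * x) :=
  (continuous_abs.rpow_const fun _ => Or.inr (by linarith)).mul continuous_id

lemma integral_inv_sq_aux {a b : ℝ} (ha : 0 < a) (hb : 0 < b) :
    ∫ s in a..b, 1 / s ^ 2 = a⁻¹ - b⁻¹ := by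
  have h0 : (0 : ℝ) ∉ Set.uIcc a b := Set.notMem_uIcc_of_lt ha hb
  have heq : ∀ s : ℝ, (1 : ℝ) / s ^ 2 = s ^ (-2 : ℤ) := by
    intro s
    rw [zpow_neg, one_div, zpow_two, sq]
  simp_rw [heq]
  rw [integral_zpow (Or.inr ⟨by norm_num, h0⟩)]
  norm_num
  ring

/-- Pointwise bound for the potential energy:
`ρ̃ · H_l(ρ) ≤ |P(ρ) − P̃|^{l−1} (P(ρ) − P̃) (ρ − ρ̃)` for all `ρ > 0`. -/
theorem stmt3 (P : ℝ → ℝ) (l : ℝ) (hl : 1 ≤ l) (ρtil : ℝ) (hρtil : 0 < ρtil)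
    (hP_diff : ∀ ρ ∈ Set.Ioi (0 : ℝ), DifferentiableAt ℝ P ρ)
    (hP_cont : ContinuousOn (deriv P) (Set.Ioi 0))
    (hP_mono : MonotoneOn P (Set.Ioi 0))
    (H : ℝ → ℝ)
    (hH : ∀ ρ, H ρ =
      ρ * ∫ s in ρtil..ρ, (1 / s ^ 2) * (|P s - P ρtil| ^ (l - 1) * (P s - P ρtil))) :
    ∀ ρ ∈ Set.Ioi (0 : ℝ),
      ρtil * H ρ ≤ |P ρ - P ρtil| ^ (l - 1) * (P ρ - P ρtil) * (ρ - ρtil) := by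
  intro ρ hρ
  have hρ0 : (0 : ℝ) < ρ := hρ
  set g : ℝ → ℝ := fun s => |P s - P ρtil| ^ (l - 1) * (P s - P ρtil) with hg_def
  -- continuity of P on Ioi 0
  have hP_cont' : ContinuousOn P (Set.Ioi 0) := fun x hx =>
    (hP_diff x hx).continuousAt.continuousWithinAt
  have hg_cont : ContinuousOn g (Set.Ioi 0) :=
    (f_cont_aux l hl).comp_continuousOn (hP_cont'.sub continuousOn_const)
  have hg_mono : MonotoneOn g (Set.Ioi 0) := fun a ha b hb hab =>
    f_mono_aux l hl (sub_le_sub_right (hP_mono ha hb hab) _)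
  have hsub : ∀ a b : ℝ, 0 < a → 0 < b → Set.uIcc a b ⊆ Set.Ioi 0 := by
    intro a b ha hb s hs
    exact lt_of_lt_of_le (lt_min ha hb) hs.1
  have hcont_h : ∀ a b : ℝ, 0 < a → 0 < b →
      ContinuousOn (fun s => (1 / s ^ 2) * g s) (Set.uIcc a b) := by
    intro a b ha hb
    apply ContinuousOn.mul
    · exact continuousOn_const.div ((continuous_pow 2).continuousOn)
        (fun s hs => pow_ne_zero 2 (ne_of_gt (hsub a b ha hb hs)))
    · exact hg_cont.mono (hsub a b ha hb)
  have hcont_c : ∀ a b : ℝ, 0 < a → 0 < b →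
      ContinuousOn (fun s => (1 / s ^ 2) * g ρ) (Set.uIcc a b) := by
    intro a b ha hb
    exact (continuousOn_const.div ((continuous_pow 2).continuousOn)
        (fun s hs => pow_ne_zero 2 (ne_of_gt (hsub a b ha hb hs)))).mul continuousOn_const
  rw [hH]
  rcases le_total ρtil ρ with hle | hle
  · -- ρtil ≤ ρ
    have hint1 : IntervalIntegrable (fun s => (1 / s ^ 2) * g s) volume ρtil ρ :=
      (hcont_h ρtil ρ hρtil hρ0).intervalIntegrable
    have hint2 : IntervalIntegrable (fun s => (1 / s ^ 2) * g ρ) volume ρtil ρ :=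
      (hcont_c ρtil ρ hρtil hρ0).intervalIntegrable
    have hmono_int : (∫ s in ρtil..ρ, (1 / s ^ 2) * g s) ≤
        ∫ s in ρtil..ρ, (1 / s ^ 2) * g ρ := by
      apply intervalIntegral.integral_mono_on hle hint1 hint2
      intro s hs
      have hs0 : (0 : ℝ) < s := lt_of_lt_of_le hρtil hs.1
      exact mul_le_mul_of_nonneg_left (hg_mono hs0 hρ hs.2) (by positivity)
    have hval : (∫ s in ρtil..ρ, (1 / s ^ 2) * g ρ) = (ρtil⁻¹ - ρ⁻¹) * g ρ := by
      rw [intervalIntegral.integral_mul_const, integral_inv_sq_aux hρtil hρ0]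
    rw [hval] at hmono_int
    have hfinal : ρtil * (ρ * ((ρtil⁻¹ - ρ⁻¹) * g ρ)) = g ρ * (ρ - ρtil) := by
      field_simp
    calc ρtil * (ρ * ∫ s in ρtil..ρ, (1 / s ^ 2) * g s)
        ≤ ρtil * (ρ * ((ρtil⁻¹ - ρ⁻¹) * g ρ)) := by
          apply mul_le_mul_of_nonneg_left _ hρtil.le
          exact mul_le_mul_of_nonneg_left hmono_int hρ0.le
      _ = g ρ * (ρ - ρtil) := hfinal
  · -- ρ ≤ ρtil
    have hint1 : IntervalIntegrable (fun s => (1 / s ^ 2) * g s) volume ρ ρtil :=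
      (hcont_h ρ ρtil hρ0 hρtil).intervalIntegrable
    have hint2 : IntervalIntegrable (fun s => (1 / s ^ 2) * g ρ) volume ρ ρtil :=
      (hcont_c ρ ρtil hρ0 hρtil).intervalIntegrable
    have hmono_int : (∫ s in ρ..ρtil, (1 / s ^ 2) * g ρ) ≤
        ∫ s in ρ..ρtil, (1 / s ^ 2) * g s := by
      apply intervalIntegral.integral_mono_on hle hint2 hint1
      intro s hs
      have hs0 : (0 : ℝ) < s := lt_of_lt_of_le hρ0 hs.1
      exact mul_le_mul_of_nonneg_left (hg_mono hρ hs0 hs.1) (by positivity)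
    have hval : (∫ s in ρ..ρtil, (1 / s ^ 2) * g ρ) = (ρ⁻¹ - ρtil⁻¹) * g ρ := by
      rw [intervalIntegral.integral_mul_const, integral_inv_sq_aux hρ0 hρtil]
    rw [hval] at hmono_int
    have hsymm : (∫ s in ρtil..ρ, (1 / s ^ 2) * g s) =
        -(∫ s in ρ..ρtil, (1 / s ^ 2) * g s) := by
      rw [intervalIntegral.integral_symm]
    have hfinal : ρtil * (ρ * -((ρ⁻¹ - ρtil⁻¹) * g ρ)) = g ρ * (ρ - ρtil) := by
      field_simp
      ring
    calc ρtil * (ρ * ∫ s in ρtil..ρ, (1 / s ^ 2) * g s)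
        = ρtil * (ρ * -(∫ s in ρ..ρtil, (1 / s ^ 2) * g s)) := by rw [hsymm]
      _ ≤ ρtil * (ρ * -((ρ⁻¹ - ρtil⁻¹) * g ρ)) := by
          apply mul_le_mul_of_nonneg_left _ hρtil.le
          exact mul_le_mul_of_nonneg_left (neg_le_neg hmono_int) hρ0.le
      _ = g ρ * (ρ - ρtil) := hfinal
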